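/- Let m ≥ 1 and let Q be an m×m signed permutation matrix. Then TR(Q) and AD(Q) are again m×m signed permutation matrices and s(AD(Q)) = s(Q) and s(TR(Q)) = s(Q). -/

import Mathlib

open Matrix
open scoped Classical

noncomputable section

def IsSignedPerm {m : ℕ} (Q : Matrix (Fin m) (Fin m) ℝ) : Prop :=
  (∀ i, ∃! j, Q i j ≠ 0) ∧ (∀ j, ∃! i, Q i j ≠ 0) ∧
    ∀ i j, Q i j ≠ 0 → Q i j = 1 ∨ Q i j = -1

def NE {m : ℕ} (Q : Matrix (Fin m) (Fin m) ℝ) (i j : Fin m) : ℕ :=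
  (Finset.univ.filter fun p : Fin m × Fin m => p.1 < i ∧ j < p.2 ∧ Q p.1 p.2 ≠ 0).card

def SW {m : ℕ} (Q : Matrix (Fin m) (Fin m) ℝ) (i j : Fin m) : ℕ := NE Qᵀ j i

def deltaRow {m : ℕ} (Q : Matrix (Fin m) (Fin m) ℝ) (i : Fin m) : ℝ :=
  ∑ j, Q i j * (-1 : ℝ) ^ NE Q i j

def DeltaM {m : ℕ} (Q : Matrix (Fin m) (Fin m) ℝ) : Matrix (Fin m) (Fin m) ℝ :=
  Matrix.diagonal (deltaRow Q)

def sFun {m : ℕ} (Q : Matrix (Fin m) (Fin m) ℝ) : ℝ := (DeltaM Q).trace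

def Jplus (m : ℕ) : Matrix (Fin m) (Fin m) ℝ :=
  Matrix.diagonal fun i => (-1 : ℝ) ^ (i : ℕ)

def TR {m : ℕ} (Q : Matrix (Fin m) (Fin m) ℝ) : Matrix (Fin m) (Fin m) ℝ :=
  Jplus m * Qᵀ * Jplus m

def Amat (m : ℕ) : Matrix (Fin m) (Fin m) ℝ :=
  Matrix.of fun i j => if (i : ℕ) + (j : ℕ) = m - 1 then (-1 : ℝ) ^ (i : ℕ) else 0

def AD {m : ℕ} (Q : Matrix (Fin m) (Fin m) ℝ) : Matrix (Fin m) (Fin m) ℝ :=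
  (Amat m)ᵀ * Q * Amat m

def IsUpperPos {m : ℕ} (R : Matrix (Fin m) (Fin m) ℝ) : Prop :=
  (∀ i j, j < i → R i j = 0) ∧ ∀ i, 0 < R i i

def Wmat {m : ℕ} (γ : ℝ → Fin m → ℝ) (t : ℝ) : Matrix (Fin m) (Fin m) ℝ :=
  Matrix.of fun i j => iteratedDeriv (j : ℕ) γ t i

def Wronskian {m : ℕ} (γ : ℝ → Fin m → ℝ) (t : ℝ) : ℝ := (Wmat γ t).det

def PosLocConv {m : ℕ} (γ : ℝ → Fin m → ℝ) : Prop :=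
  ∀ t ∈ Set.Icc (0 : ℝ) 1, 0 < Wronskian γ t

def IsFrameAt {m : ℕ} (γ : ℝ → Fin m → ℝ) (t : ℝ) (F : Matrix (Fin m) (Fin m) ℝ) : Prop :=
  Fᵀ * F = 1 ∧ F.det = 1 ∧ ∃ R, IsUpperPos R ∧ Wmat γ t = F * R

def IsFrenet {m : ℕ} (γ : ℝ → Fin m → ℝ) (F : ℝ → Matrix (Fin m) (Fin m) ℝ) : Prop :=
  ∀ t ∈ Set.Icc (0 : ℝ) 1, IsFrameAt γ t (F t)

def e1 {m : ℕ} : Fin m → ℝ := fun i => if (i : ℕ) = 0 then 1 else 0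

def frobNorm {m : ℕ} (M : Matrix (Fin m) (Fin m) ℝ) : ℝ :=
  Real.sqrt (∑ i, ∑ j, (M i j) ^ 2)

namespace SPHelp

open Finset

variable {m : ℕ}

lemma pow_par (a b : ℕ) (h : a % 2 = b % 2) : (-1:ℝ)^a = (-1)^b := by
  rw [← Nat.div_add_mod a 2, ← Nat.div_add_mod b 2, h, pow_add, pow_add, pow_mul, pow_mul]
  norm_num

def neP (σ : Equiv.Perm (Fin m)) (i : Fin m) : ℕ :=
  (univ.filter fun a => a < i ∧ σ i < σ a).card

def swP (σ : Equiv.Perm (Fin m)) (i : Fin m) : ℕ :=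
  (univ.filter fun a => i < a ∧ σ a < σ i).card

def nwP (σ : Equiv.Perm (Fin m)) (i : Fin m) : ℕ :=
  (univ.filter fun a => a < i ∧ σ a < σ i).card

lemma ne_add_nw (σ : Equiv.Perm (Fin m)) (i : Fin m) : neP σ i + nwP σ i = i := by
  rw [neP, nwP, ← Finset.card_union_of_disjoint]
  · have : ((univ.filter fun a => a < i ∧ σ i < σ a) ∪
        (univ.filter fun a => a < i ∧ σ a < σ i)) = Finset.Iio i := by
      ext a
      simp only [mem_union, mem_filter, mem_univ, true_and, mem_Iio]
      constructor
      · rintro (⟨h, _⟩ | ⟨h, _⟩) <;> exact h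
      · intro h
        have hne : σ a ≠ σ i := fun he => absurd (σ.injective he) (ne_of_lt h)
        rcases lt_or_gt_of_ne hne with h' | h'
        · exact Or.inr ⟨h, h'⟩
        · exact Or.inl ⟨h, h'⟩
    rw [this, Fin.card_Iio]
  · rw [Finset.disjoint_left]
    rintro a ha hb
    simp only [mem_filter] at ha hb
    exact absurd (lt_trans ha.2.2 hb.2.2) (lt_irrefl _)

lemma sw_add_nw (σ : Equiv.Perm (Fin m)) (i : Fin m) : swP σ i + nwP σ i = σ i := by
  have key : ((univ.filter fun a => i < a ∧ σ a < σ i) ∪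
      (univ.filter fun a => a < i ∧ σ a < σ i)) = univ.filter fun a => σ a < σ i := by
    ext a
    simp only [mem_union, mem_filter, mem_univ, true_and]
    constructor
    · rintro (⟨_, h⟩ | ⟨_, h⟩) <;> exact h
    · intro h
      have hne : a ≠ i := fun he => absurd (he ▸ h) (lt_irrefl _)
      rcases lt_or_gt_of_ne hne with h' | h'
      · exact Or.inr ⟨h', h⟩
      · exact Or.inl ⟨h', h⟩
  have hdisj : Disjoint (univ.filter fun a => i < a ∧ σ a < σ i)
      (univ.filter fun a => a < i ∧ σ a < σ i) := by
    rw [Finset.disjoint_left]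
    rintro a ha hb
    simp only [mem_filter] at ha hb
    exact absurd (lt_trans ha.2.1 hb.2.1) (lt_irrefl _)
  have hcard : (univ.filter fun a => σ a < σ i).card = (σ i : ℕ) := by
    have hc : (univ.filter fun a => σ a < σ i).card = (Finset.Iio (σ i)).card := by
      apply Finset.card_bij' (fun a _ => σ a) (fun b _ => σ.symm b)
      · intro a ha; simp only [mem_filter] at ha; simpa using ha.2
      · intro b hb; simp only [mem_Iio] at hb; simp [hb]
      · intro a _; simp
      · intro b _; simp
    rw [hc, Fin.card_Iio]
  rw [swP, nwP, ← Finset.card_union_of_disjoint hdisj, key, hcard]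

lemma sign_sw (σ : Equiv.Perm (Fin m)) (i : Fin m) :
    (-1:ℝ)^(swP σ i) = (-1)^((i:ℕ)+(σ i:ℕ)) * (-1)^(neP σ i) := by
  have h1 := ne_add_nw σ i
  have h2 := sw_add_nw σ i
  rw [← pow_add]
  exact pow_par _ _ (by omega)

lemma NE_eq (Q : Matrix (Fin m) (Fin m) ℝ) (σ : Equiv.Perm (Fin m))
    (hσ : ∀ a b, Q a b ≠ 0 ↔ b = σ a) (i j : Fin m) :
    NE Q i j = (univ.filter fun a => a < i ∧ j < σ a).card := by
  rw [NE]
  apply Finset.card_bij' (fun p _ => p.1) (fun a _ => (a, σ a))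
  · intro p hp
    simp only [mem_filter, mem_univ, true_and] at hp ⊢
    have := (hσ p.1 p.2).1 hp.2.2
    exact ⟨hp.1, this ▸ hp.2.1⟩
  · intro a ha
    simp only [mem_filter, mem_univ, true_and] at ha ⊢
    exact ⟨ha.1, ha.2, (hσ a (σ a)).2 rfl⟩
  · intro p hp
    simp only [mem_filter, mem_univ, true_and] at hp
    have := (hσ p.1 p.2).1 hp.2.2
    exact Prod.ext rfl this.symm
  · intro a _; rfl

lemma deltaRow_eq (Q : Matrix (Fin m) (Fin m) ℝ) (σ : Equiv.Perm (Fin m))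
    (hσ : ∀ a b, Q a b ≠ 0 ↔ b = σ a) (i : Fin m) :
    deltaRow Q i = Q i (σ i) * (-1:ℝ)^(neP σ i) := by
  rw [deltaRow, Finset.sum_eq_single (σ i)]
  · rw [NE_eq Q σ hσ i (σ i)]; rfl
  · intro b _ hb
    have : Q i b = 0 := by
      by_contra h
      exact hb ((hσ i b).1 h)
    rw [this, zero_mul]
  · intro h; exact absurd (mem_univ _) h

lemma sFun_eq (Q : Matrix (Fin m) (Fin m) ℝ) : sFun Q = ∑ i, deltaRow Q i := by
  rw [sFun, DeltaM, Matrix.trace_diagonal]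

/-- Extract a permutation from a signed permutation matrix. -/
lemma exists_perm (Q : Matrix (Fin m) (Fin m) ℝ) (hQ : IsSignedPerm Q) :
    ∃ σ : Equiv.Perm (Fin m), ∀ a b, Q a b ≠ 0 ↔ b = σ a := by
  choose f h1 h2 using hQ.1
  have hinj : Function.Injective f := by
    intro a b hab
    obtain ⟨c, _, hc2⟩ := hQ.2.1 (f a)
    have := hc2 a (h1 a)
    have h2' := hc2 b (hab ▸ h1 b)
    rw [this, h2']
  have hbij : Function.Bijective f := (Finite.injective_iff_bijective).1 hinj
  refine ⟨Equiv.ofBijective f hbij, fun a b => ?_⟩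
  constructor
  · intro h; exact h2 a b h
  · intro h; rw [h]; exact h1 a

lemma isSignedPerm_of (M : Matrix (Fin m) (Fin m) ℝ) (τ : Equiv.Perm (Fin m))
    (h : ∀ a b, M a b ≠ 0 ↔ b = τ a)
    (hv : ∀ a b, M a b ≠ 0 → M a b = 1 ∨ M a b = -1) : IsSignedPerm M := by
  refine ⟨fun i => ⟨τ i, (h i (τ i)).2 rfl, fun y hy => (h i y).1 hy⟩,
    fun j => ⟨τ.symm j, ?_, fun y hy => ?_⟩, hv⟩
  · show M (τ.symm j) j ≠ 0
    rw [h]; simp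
  · have hj := (h y j).1 hy
    rw [hj]; simp

end SPHelp

section Entries

open SPHelp Finset

variable {m : ℕ}

lemma TR_apply (Q : Matrix (Fin m) (Fin m) ℝ) (i j : Fin m) :
    TR Q i j = (-1:ℝ)^((i:ℕ)+(j:ℕ)) * Q j i := by
  rw [TR, Jplus, Matrix.mul_diagonal, Matrix.diagonal_mul, Matrix.transpose_apply, pow_add]
  ring

lemma rev_val_add (i : Fin m) : (i : ℕ) + (Fin.rev i : ℕ) = m - 1 := by
  have := i.isLt
  rw [Fin.val_rev]
  omega

lemma AD_apply (Q : Matrix (Fin m) (Fin m) ℝ) (i j : Fin m) :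
    AD Q i j = (-1:ℝ)^((i:ℕ)+(j:ℕ)) * Q (Fin.rev i) (Fin.rev j) := by
  have hA : ∀ (a k : Fin m), Amat m a k = if a = Fin.rev k then (-1:ℝ)^(a:ℕ) else 0 := by
    intro a k
    rw [Amat]
    simp only [Matrix.of_apply]
    congr 1
    have h1 := a.isLt
    have h2 := k.isLt
    simp only [Fin.ext_iff, Fin.val_rev, eq_iff_iff]
    omega
  rw [AD]
  have hcol : ∀ b : Fin m, ((Amat m)ᵀ * Q) i b = (-1:ℝ)^((Fin.rev i : Fin m) : ℕ) * Q (Fin.rev i) b := by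
    intro b
    rw [Matrix.mul_apply]
    rw [Finset.sum_eq_single (Fin.rev i)]
    · rw [Matrix.transpose_apply, hA]; simp
    · intro a _ ha
      rw [Matrix.transpose_apply, hA, if_neg ha, zero_mul]
    · intro h; exact absurd (mem_univ _) h
  rw [Matrix.mul_apply]
  rw [Finset.sum_eq_single (Fin.rev j)]
  · rw [hcol, hA, if_pos rfl]
    have hi := rev_val_add i
    have hj := rev_val_add j
    have : (-1:ℝ)^((Fin.rev i : Fin m) : ℕ) * (-1:ℝ)^((Fin.rev j : Fin m) : ℕ)
        = (-1:ℝ)^((i:ℕ)+(j:ℕ)) := by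
      rw [← pow_add]
      apply pow_par
      omega
    rw [mul_assoc, mul_comm (Q _ _), ← mul_assoc, this]
  · intro b _ hb
    rw [hA, if_neg hb, mul_zero]
  · intro h; exact absurd (mem_univ _) h

end Entries

theorem Equiv.Perm.apply_inv_self {α : Type*} (f : Equiv.Perm α) (x : α) : f (f⁻¹ x) = x :=
  Equiv.apply_symm_apply f x

theorem Equiv.Perm.inv_apply_self {α : Type*} (f : Equiv.Perm α) (x : α) : f⁻¹ (f x) = x :=
  Equiv.symm_apply_apply f x

section Main

open SPHelp Finset

variable {m : ℕ}

lemma neP_inv (σ : Equiv.Perm (Fin m)) (i : Fin m) :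
    neP σ⁻¹ i = swP σ (σ⁻¹ i) := by
  rw [neP, swP]
  apply Finset.card_bij' (fun a _ => σ⁻¹ a) (fun b _ => σ b)
  · intro a ha
    simp only [mem_filter, mem_univ, true_and] at ha ⊢
    refine ⟨ha.2, ?_⟩
    rw [Equiv.Perm.apply_inv_self, Equiv.Perm.apply_inv_self]
    exact ha.1
  · intro b hb
    simp only [mem_filter, mem_univ, true_and] at hb ⊢
    refine ⟨?_, ?_⟩
    · have := hb.2
      rwa [Equiv.Perm.apply_inv_self] at this
    · rw [Equiv.Perm.inv_apply_self]
      exact hb.1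
  · intro a _; exact Equiv.Perm.apply_inv_self σ a
  · intro b _; exact Equiv.Perm.inv_apply_self σ b

lemma neP_rev (σ : Equiv.Perm (Fin m)) (i : Fin m) :
    neP (Fin.revPerm.trans (σ.trans Fin.revPerm)) i = swP σ (Fin.rev i) := by
  rw [neP, swP]
  apply Finset.card_bij' (fun a _ => Fin.rev a) (fun b _ => Fin.rev b)
  · intro a ha
    simp only [mem_filter, mem_univ, true_and, Equiv.trans_apply, Fin.revPerm_apply] at ha ⊢
    exact ⟨Fin.rev_lt_rev.2 ha.1, Fin.rev_lt_rev.1 ha.2⟩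
  · intro b hb
    simp only [mem_filter, mem_univ, true_and, Equiv.trans_apply, Fin.revPerm_apply] at hb ⊢
    refine ⟨?_, ?_⟩
    · rw [show i = Fin.rev (Fin.rev i) from (Fin.rev_rev i).symm]
      exact Fin.rev_lt_rev.2 hb.1
    · rw [Fin.rev_rev]
      exact Fin.rev_lt_rev.2 hb.2
  · intro a _; exact Fin.rev_rev a
  · intro b _; exact Fin.rev_rev b

lemma TR_hσ (Q : Matrix (Fin m) (Fin m) ℝ) (σ : Equiv.Perm (Fin m))
    (hσ : ∀ a b, Q a b ≠ 0 ↔ b = σ a) (a b : Fin m) :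
    TR Q a b ≠ 0 ↔ b = σ⁻¹ a := by
  have hs : ((-1:ℝ)^((a:ℕ)+(b:ℕ))) ≠ 0 := pow_ne_zero _ (by norm_num)
  rw [TR_apply, mul_ne_zero_iff]
  constructor
  · rintro ⟨-, h⟩
    have h2 := (hσ b a).1 h
    rw [h2, Equiv.Perm.inv_apply_self]
  · intro h
    refine ⟨hs, (hσ b a).2 ?_⟩
    rw [h, Equiv.Perm.apply_inv_self]

lemma AD_hσ (Q : Matrix (Fin m) (Fin m) ℝ) (σ : Equiv.Perm (Fin m))
    (hσ : ∀ a b, Q a b ≠ 0 ↔ b = σ a) (a b : Fin m) :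
    AD Q a b ≠ 0 ↔ b = (Fin.revPerm.trans (σ.trans Fin.revPerm)) a := by
  have hs : ((-1:ℝ)^((a:ℕ)+(b:ℕ))) ≠ 0 := pow_ne_zero _ (by norm_num)
  rw [AD_apply, mul_ne_zero_iff]
  simp only [Equiv.trans_apply, Fin.revPerm_apply]
  constructor
  · rintro ⟨-, h⟩
    have h2 := (hσ _ _).1 h
    rw [← h2, Fin.rev_rev]
  · intro h
    refine ⟨hs, (hσ _ _).2 ?_⟩
    rw [h, Fin.rev_rev]

lemma sign_mul_pm (x : ℝ) (hx : x = 1 ∨ x = -1) (n : ℕ) :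
    (-1:ℝ)^n * x = 1 ∨ (-1:ℝ)^n * x = -1 := by
  rcases hx with h | h <;> rcases Nat.even_or_odd n with he | he <;>
    simp [h, he.neg_one_pow]

lemma deltaRow_TR (Q : Matrix (Fin m) (Fin m) ℝ) (σ : Equiv.Perm (Fin m))
    (hσ : ∀ a b, Q a b ≠ 0 ↔ b = σ a) (i : Fin m) :
    deltaRow (TR Q) i = deltaRow Q (σ⁻¹ i) := by
  rw [deltaRow_eq (TR Q) σ⁻¹ (TR_hσ Q σ hσ) i, deltaRow_eq Q σ hσ (σ⁻¹ i),
    neP_inv, TR_apply, sign_sw σ (σ⁻¹ i), Equiv.Perm.apply_inv_self]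
  have hs : (-1:ℝ)^((i:ℕ)+((σ⁻¹ i : Fin m):ℕ)) * (-1)^(((σ⁻¹ i : Fin m):ℕ)+(i:ℕ)) = 1 := by
    rw [← pow_add, pow_par _ 0 (by omega), pow_zero]
  linear_combination Q (σ⁻¹ i) i * (-1:ℝ)^(neP σ (σ⁻¹ i)) * hs

lemma deltaRow_AD (Q : Matrix (Fin m) (Fin m) ℝ) (σ : Equiv.Perm (Fin m))
    (hσ : ∀ a b, Q a b ≠ 0 ↔ b = σ a) (i : Fin m) :
    deltaRow (AD Q) i = deltaRow Q (Fin.rev i) := by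
  set τ : Equiv.Perm (Fin m) := Fin.revPerm.trans (σ.trans Fin.revPerm) with hτdef
  have hτ : τ i = Fin.rev (σ (Fin.rev i)) := by
    simp [hτdef, Equiv.trans_apply, Fin.revPerm_apply]
  rw [deltaRow_eq (AD Q) τ (AD_hσ Q σ hσ) i, deltaRow_eq Q σ hσ (Fin.rev i),
    neP_rev, AD_apply, sign_sw σ (Fin.rev i), hτ, Fin.rev_rev]
  have h1 := rev_val_add i
  have h2 := rev_val_add (σ (Fin.rev i))
  have hs : (-1:ℝ)^((i:ℕ)+((Fin.rev (σ (Fin.rev i)) : Fin m):ℕ))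
      * (-1)^(((Fin.rev i : Fin m):ℕ)+((σ (Fin.rev i) : Fin m):ℕ)) = 1 := by
    rw [← pow_add, pow_par _ 0 (by omega), pow_zero]
  linear_combination Q (Fin.rev i) (σ (Fin.rev i)) * (-1:ℝ)^(neP σ (Fin.rev i)) * hs

end Main

theorem stmt0 (m : ℕ) (hm : 1 ≤ m) (Q : Matrix (Fin m) (Fin m) ℝ) (hQ : IsSignedPerm Q) :
    IsSignedPerm (TR Q) ∧ IsSignedPerm (AD Q) ∧ sFun (AD Q) = sFun Q ∧ sFun (TR Q) = sFun Q := by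
  obtain ⟨σ, hσ⟩ := SPHelp.exists_perm Q hQ
  have hTRv : ∀ a b, TR Q a b ≠ 0 → TR Q a b = 1 ∨ TR Q a b = -1 := by
    intro a b h
    rw [TR_apply] at h ⊢
    exact sign_mul_pm _ (hQ.2.2 b a (mul_ne_zero_iff.1 h).2) _
  have hADv : ∀ a b, AD Q a b ≠ 0 → AD Q a b = 1 ∨ AD Q a b = -1 := by
    intro a b h
    rw [AD_apply] at h ⊢
    exact sign_mul_pm _ (hQ.2.2 _ _ (mul_ne_zero_iff.1 h).2) _
  refine ⟨SPHelp.isSignedPerm_of _ σ⁻¹ (TR_hσ Q σ hσ) hTRv,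
    SPHelp.isSignedPerm_of _ (Fin.revPerm.trans (σ.trans Fin.revPerm)) (AD_hσ Q σ hσ) hADv,
    ?_, ?_⟩
  · rw [SPHelp.sFun_eq, SPHelp.sFun_eq]
    calc ∑ i, deltaRow (AD Q) i = ∑ i, deltaRow Q (Fin.rev i) := by
          exact Finset.sum_congr rfl fun i _ => deltaRow_AD Q σ hσ i
      _ = ∑ i, deltaRow Q (Fin.revPerm i) := by simp
      _ = ∑ i, deltaRow Q i := Equiv.sum_comp Fin.revPerm (deltaRow Q)
  · rw [SPHelp.sFun_eq, SPHelp.sFun_eq]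
    calc ∑ i, deltaRow (TR Q) i = ∑ i, deltaRow Q (σ⁻¹ i) := by
          exact Finset.sum_congr rfl fun i _ => deltaRow_TR Q σ hσ i
      _ = ∑ i, deltaRow Q i := Equiv.sum_comp σ⁻¹ (deltaRow Q)
end
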